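/- For 0 ≤ r ≤ n and 0 ≤ k ≤ R(n,r), the rank numbers satisfy the Cauchy-type convolution formula s(n,r,k) = Σ_{i=0}^{k} s(r,r,i) · s(n−r,n−r,k−i). -/

import Mathlib

open Finset

/-- The alphabet `A(n,r)` is encoded as the integer interval `[-(n-r), r]`:
the barred symbol `k̄` is `-k`, the tilded symbol `k̃` is `k`, and `0` is `0`.
A string of `S(n,r)` is a function `w : Fin n → ℤ` satisfying: the first `r`
entries lie in `[0,r]`, the last `n-r` entries lie in `[-(n-r),0]`, the whole
string is weakly decreasing, the nonzero entries of the positive part are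
strictly decreasing, and the nonzero entries of the negative part are strictly
decreasing. -/
def Admissible (n r : ℕ) (w : Fin n → ℤ) : Prop :=
  (∀ i : Fin n, (i : ℕ) < r → 0 ≤ w i ∧ w i ≤ (r : ℤ)) ∧
  (∀ i : Fin n, r ≤ (i : ℕ) → -((n - r : ℕ) : ℤ) ≤ w i ∧ w i ≤ 0) ∧
  (∀ i j : Fin n, i ≤ j → w j ≤ w i) ∧
  (∀ i j : Fin n, i < j → (j : ℕ) < r → w j ≠ 0 → w j < w i) ∧
  (∀ i j : Fin n, i < j → r ≤ (i : ℕ) → w i ≠ 0 → w j < w i)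

/-- The componentwise (product) order on strings. -/
def sle {n : ℕ} (w w' : Fin n → ℤ) : Prop := ∀ i, w i ≤ w' i

/-- Strict componentwise order. -/
def slt {n : ℕ} (w w' : Fin n → ℤ) : Prop := sle w w' ∧ w ≠ w'

/-- `w'` covers `w` in the poset `S(n,r)`. -/
def SCovers (n r : ℕ) (w w' : Fin n → ℤ) : Prop :=
  slt w w' ∧ ¬ ∃ u : Fin n → ℤ, Admissible n r u ∧ slt w u ∧ slt u w'

/-- The rank function `ρ` of `S(n,r)`:
`ρ(i_1⋯i_r|j_1⋯j_{n-r}) = Σ i_k + Σ (k - j_k)` (symbols read as integers). -/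
def rho (n r : ℕ) (w : Fin n → ℤ) : ℤ :=
  ∑ i : Fin n, (if (i : ℕ) < r then w i else ((((i : ℕ) - r : ℕ) : ℤ) + 1 + w i))

/-- `wc` is the complement of `w` in `S(n,r)`: the nonzero symbols of `wc`
are exactly the elements of `A(n,r) ∖ {0}` that are not symbols of `w`. -/
def ComplOf (n r : ℕ) (w wc : Fin n → ℤ) : Prop :=
  ∀ a : ℤ, a ≠ 0 →
    ((∃ i, wc i = a) ↔ (-((n - r : ℕ) : ℤ) ≤ a ∧ a ≤ (r : ℤ) ∧ ¬ ∃ i, w i = a))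

/-- The top rank `R(n,r) = C(r+1,2) + C(n-r+1,2)`. -/
def Rnk (n r : ℕ) : ℕ := r * (r + 1) / 2 + (n - r) * (n - r + 1) / 2

/-- `s(n,r,k)`: the number of elements of `S(n,r)` of rank `k`. -/
noncomputable def sCount (n r k : ℕ) : ℕ :=
  {w : Fin n → ℤ | Admissible n r w ∧ rho n r w = (k : ℤ)}.ncard

/-- The minimum `0⋯0|12⋯(n-r)` of `S(n,r)`. -/
def botStr (n r : ℕ) : Fin n → ℤ :=
  fun i => if (i : ℕ) < r then 0 else -((((i : ℕ) - r : ℕ) : ℤ) + 1)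

/-- The maximum `r(r-1)⋯1|0⋯0` of `S(n,r)`. -/
def topStr (n r : ℕ) : Fin n → ℤ :=
  fun i => if (i : ℕ) < r then (r : ℤ) - ((i : ℕ) : ℤ) else 0

/-- The string `r(r-1)⋯1|12⋯(n-r)` containing every nonzero symbol. -/
def fullStr (n r : ℕ) : Fin n → ℤ :=
  fun i => if (i : ℕ) < r then (r : ℤ) - ((i : ℕ) : ℤ)
           else -((((i : ℕ) - r : ℕ) : ℤ) + 1)

/-- An `(n,r)`-function: increasing on the alphabet, zero at `0`,
and strictly negative on the barred symbols. -/
def IsNRFun (n r : ℕ) (f : ℤ → ℝ) : Prop :=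
  f 0 = 0 ∧
  (∀ a b : ℤ, -((n - r : ℕ) : ℤ) ≤ a → a ≤ b → b ≤ (r : ℤ) → f a ≤ f b) ∧
  (∀ a : ℤ, -((n - r : ℕ) : ℤ) ≤ a → a < 0 → f a < 0)

/-- The total sum of `f` over the alphabet `A(n,r)` is nonnegative
(the defining condition of an `(n,r)`-weight function, since `f 0 = 0`). -/
def TotalNN (n r : ℕ) (f : ℤ → ℝ) : Prop :=
  0 ≤ ∑ a ∈ Finset.Icc (-((n - r : ℕ) : ℤ)) (r : ℤ), f a

/-- The sum function `Σ_f` induced by `f` on strings. -/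
def Sf (n : ℕ) (f : ℤ → ℝ) (w : Fin n → ℤ) : ℝ := ∑ i : Fin n, f (w i)
/-- the Cauchy-type convolution formula for the rank numbers:
`s(n,r,k) = Σ_{i=0}^{k} s(r,r,i) · s(n-r,n-r,k-i)`. -/

def dlist (s : Finset ℤ) (j : ℕ) : ℤ := ((s.sort (· ≤ ·)).reverse).getD j 0

lemma dlist_length (s : Finset ℤ) : ((s.sort (· ≤ ·)).reverse).length = s.card := by
  simp [Finset.length_sort]

lemma dlist_eq_getElem {s : Finset ℤ} {j : ℕ} (h : j < ((s.sort (· ≤ ·)).reverse).length) :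
    dlist s j = ((s.sort (· ≤ ·)).reverse)[j] := List.getD_eq_getElem _ 0 h

lemma dlist_mem {s : Finset ℤ} {j : ℕ} (h : j < s.card) : dlist s j ∈ s := by
  have hl : j < ((s.sort (· ≤ ·)).reverse).length := by rwa [dlist_length]
  rw [dlist_eq_getElem hl]
  have := List.getElem_mem hl
  rwa [List.mem_reverse, Finset.mem_sort] at this

lemma dlist_zero {s : Finset ℤ} {j : ℕ} (h : s.card ≤ j) : dlist s j = 0 := by
  apply List.getD_eq_default
  rwa [dlist_length]

lemma dlist_lt_card {s : Finset ℤ} {j : ℕ} (h : dlist s j ≠ 0) : j < s.card := by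
  by_contra hc
  exact h (dlist_zero (by omega))

lemma dlist_strict {s : Finset ℤ} {j j' : ℕ} (h : j < j') (h' : j' < s.card) :
    dlist s j' < dlist s j := by
  have hl : j' < ((s.sort (· ≤ ·)).reverse).length := by rwa [dlist_length]
  have hl2 : j < ((s.sort (· ≤ ·)).reverse).length := lt_trans h hl
  have hp := List.pairwise_iff_get.1
    (by rw [List.pairwise_reverse]; exact (s.sortedLT_sort).pairwise) ⟨j, hl2⟩ ⟨j', hl⟩ h
  rw [dlist_eq_getElem hl, dlist_eq_getElem hl2]
  exact hp

lemma dlist_exists {s : Finset ℤ} {a : ℤ} (ha : a ∈ s) : ∃ j < s.card, dlist s j = a := by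
  have : a ∈ (s.sort (· ≤ ·)).reverse := by rwa [List.mem_reverse, Finset.mem_sort]
  obtain ⟨j, hj, hja⟩ := List.getElem_of_mem this
  exact ⟨j, by rwa [dlist_length] at hj, by rw [dlist_eq_getElem hj]; exact hja⟩

lemma dlist_nonneg {s : Finset ℤ} (hpos : ∀ a ∈ s, 0 < a) (j : ℕ) : 0 ≤ dlist s j := by
  rcases lt_or_ge j s.card with h | h
  · exact le_of_lt (hpos _ (dlist_mem h))
  · rw [dlist_zero h]

lemma dlist_le {s : Finset ℤ} {N : ℤ} (hN : 0 ≤ N) (h : ∀ a ∈ s, a ≤ N) (j : ℕ) :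
    dlist s j ≤ N := by
  rcases lt_or_ge j s.card with hj | hj
  · exact h _ (dlist_mem hj)
  · rw [dlist_zero hj]; exact hN

lemma dlist_anti {s : Finset ℤ} (hpos : ∀ a ∈ s, 0 < a) {j j' : ℕ} (h : j ≤ j') :
    dlist s j' ≤ dlist s j := by
  rcases eq_or_lt_of_le h with rfl | h
  · exact le_refl _
  · rcases lt_or_ge j' s.card with hj | hj
    · exact le_of_lt (dlist_strict h hj)
    · rw [dlist_zero hj]; exact dlist_nonneg hpos j

lemma dlist_sum {s : Finset ℤ} {R : ℕ} (h : s.card ≤ R) :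
    ∑ j ∈ range R, dlist s j = s.sum id := by
  have h1 : ∑ j ∈ range R, dlist s j = ∑ j ∈ range s.card, dlist s j := by
    refine (Finset.sum_subset (Finset.range_subset_range.2 h) ?_).symm
    intro j _ hj
    exact dlist_zero (by simpa using hj)
  have hgen : ∀ l : List ℤ, ∑ j ∈ range l.length, l.getD j 0 = l.sum := by
    intro l
    induction l with
    | nil => simp
    | cons a l ih =>
      rw [List.length_cons, Finset.sum_range_succ']
      simp only [List.getD_cons_succ, List.getD_cons_zero, List.sum_cons]
      rw [ih, add_comm]
  have h2 : ∑ j ∈ range s.card, dlist s j = ((s.sort (· ≤ ·)).reverse).sum := by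
    rw [← dlist_length s]
    exact hgen _
  rw [h1, h2, List.sum_reverse]
  have hperm := Finset.sort_perm_toList s (· ≤ ·)
  rw [hperm.sum_eq]
  rw [Finset.sum_toList]; rfl

lemma unique_desc {R : ℕ} {s : Finset ℤ} (f : ℕ → ℤ)
    (hcard : s.card ≤ R)
    (hpos : ∀ a ∈ s, 0 < a)
    (h1 : ∀ j, j < R → 0 ≤ f j)
    (h3 : ∀ j j', j < j' → j' < R → f j' ≠ 0 → f j' < f j)
    (h4 : ∀ a : ℤ, a ≠ 0 → ((∃ j, j < R ∧ f j = a) ↔ a ∈ s)) :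
    ∀ j < R, f j = dlist s j := by
  set t := s.card with ht
  classical
  set S := (range R).filter (fun j => f j ≠ 0) with hS
  have hmemS : ∀ j, j ∈ S ↔ j < R ∧ f j ≠ 0 := by
    intro j; simp [hS]
  have hdown : ∀ j j', j' ∈ S → j < j' → j ∈ S := by
    intro j j' hj' hlt
    rw [hmemS] at hj' ⊢
    obtain ⟨hj'R, hj'0⟩ := hj'
    have hjR : j < R := lt_trans hlt hj'R
    have := h3 j j' hlt hj'R hj'0
    have h0 : 0 < f j' := lt_of_le_of_ne (h1 j' hj'R) (Ne.symm hj'0)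
    exact ⟨hjR, ne_of_gt (lt_trans h0 this)⟩
  have hcardS : S.card = t := by
    rw [ht]
    apply Finset.card_bij (fun j _ => f j)
    · intro j hj
      rw [hmemS] at hj
      exact ((h4 (f j) hj.2).1 ⟨j, hj.1, rfl⟩)
    · intro j hj j' hj' heq
      rw [hmemS] at hj hj'
      by_contra hne
      rcases lt_or_gt_of_ne hne with hl | hl
      · exact absurd heq (ne_of_gt (h3 j j' hl hj'.1 hj'.2))
      · exact absurd heq (ne_of_lt (h3 j' j hl hj.1 hj.2))
    · intro a ha
      have ha0 : a ≠ 0 := ne_of_gt (hpos a ha)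
      obtain ⟨j, hjR, hja⟩ := (h4 a ha0).2 ha
      exact ⟨j, by rw [hmemS]; exact ⟨hjR, hja ▸ ha0⟩, hja⟩
  have hSrange : S = range t := by
    have hsub : S ⊆ range t := by
      intro j hj
      rw [mem_range]
      by_contra hge
      push_neg at hge
      have : range (j + 1) ⊆ S := by
        intro i hi
        rcases eq_or_lt_of_le (Nat.lt_succ_iff.1 (mem_range.1 hi)) with h | h
        · rwa [h]
        · exact hdown i j hj h
      have := Finset.card_le_card this
      simp [hcardS] at this
      omega
    exact Finset.eq_of_subset_of_card_le hsub (by simp [hcardS])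
  have hNZ : ∀ j, j < R → (f j ≠ 0 ↔ j < t) := by
    intro j hjR
    constructor
    · intro h0
      have : j ∈ S := by rw [hmemS]; exact ⟨hjR, h0⟩
      rw [hSrange, mem_range] at this; exact this
    · intro hjt
      have : j ∈ S := by rw [hSrange, mem_range]; exact hjt
      rw [hmemS] at this; exact this.2
  intro j hjR
  rcases lt_or_ge j t with hjt | hjt
  · have hts : s.card = t := rfl
    set F : Fin t → ℤ := fun i => f (t - 1 - (i : ℕ)) with hF
    set D : Fin t → ℤ := fun i => dlist s (t - 1 - (i : ℕ)) with hD
    have hFmem : ∀ i, F i ∈ s := by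
      intro i
      have hi : (i : ℕ) < t := i.2
      have hlt : t - 1 - (i : ℕ) < t := by omega
      have hltR : t - 1 - (i : ℕ) < R := lt_of_lt_of_le hlt hcard
      have := (hNZ _ hltR).2 hlt
      exact (h4 _ this).1 ⟨_, hltR, rfl⟩
    have hFmono : StrictMono F := by
      intro i i' hii
      have hi' : (i' : ℕ) < t := i'.2
      have ha : t - 1 - (i' : ℕ) < t - 1 - (i : ℕ) := by
        rw [Fin.lt_def] at hii
        omega
      have hbR : t - 1 - (i : ℕ) < R := by omega
      have hb0 : f (t - 1 - (i : ℕ)) ≠ 0 := (hNZ _ hbR).2 (by omega)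
      exact h3 _ _ ha hbR hb0
    have hDmem : ∀ i, D i ∈ s := fun i => dlist_mem (by have := i.2; omega)
    have hDmono : StrictMono D := by
      intro i i' hii
      have hi' : (i' : ℕ) < t := i'.2
      have ha : t - 1 - (i' : ℕ) < t - 1 - (i : ℕ) := by
        rw [Fin.lt_def] at hii
        omega
      exact dlist_strict ha (by omega)
    have hFD : F = D := by
      rw [Finset.orderEmbOfFin_unique hts hFmem hFmono,
        Finset.orderEmbOfFin_unique hts hDmem hDmono]
    have hkey := congrFun hFD ⟨t - 1 - j, by omega⟩
    rw [hF, hD] at hkey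
    simpa [show t - 1 - (t - 1 - j) = j by omega] using hkey
  · have h0 : f j = 0 := by
      by_contra h0
      exact absurd ((hNZ j hjR).1 h0) (by omega)
    rw [h0, dlist_zero hjt]

lemma card_Icc_int (c : ℕ) : (Icc (1:ℤ) (c:ℤ)).card = c := by
  rw [Int.card_Icc]
  simp

noncomputable def decodeStr (n r : ℕ) (p : Finset ℤ × Finset ℤ) : Fin n → ℤ :=
  fun i => if (i : ℕ) < r then dlist p.1 (i : ℕ) else -(dlist p.2 (n - 1 - (i : ℕ)))

noncomputable def Mconst (c : ℕ) : ℤ := ∑ a ∈ Icc (1:ℤ) (c:ℤ), a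

noncomputable def Epairs (n r : ℕ) (k : ℤ) : Finset (Finset ℤ × Finset ℤ) :=
  ((Icc (1:ℤ) (r:ℤ)).powerset ×ˢ (Icc (1:ℤ) (((n - r : ℕ)):ℤ)).powerset).filter
    (fun p => p.1.sum id + (Mconst (n - r) - p.2.sum id) = k)

lemma gauss (m : ℕ) : ∑ j ∈ range m, ((j:ℤ) + 1) = Mconst m := by
  induction m with
  | zero => simp [Mconst]
  | succ m ih =>
    rw [Finset.sum_range_succ, ih, Mconst, Mconst]
    rw [show ((m + 1 : ℕ) : ℤ) = (m : ℤ) + 1 by push_cast; ring]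
    have hins : Icc (1:ℤ) ((m:ℤ) + 1) = insert ((m:ℤ) + 1) (Icc (1:ℤ) (m:ℤ)) := by
      ext x
      simp only [mem_Icc, mem_insert]
      omega
    rw [hins, Finset.sum_insert (by simp only [mem_Icc]; omega)]
    push_cast
    ring

lemma adm_decode {n r : ℕ} (hr : r ≤ n) {p : Finset ℤ × Finset ℤ}
    (hA : p.1 ⊆ Icc (1:ℤ) (r:ℤ)) (hB : p.2 ⊆ Icc (1:ℤ) (((n - r : ℕ)):ℤ)) :
    Admissible n r (decodeStr n r p) := by
  have hApos : ∀ a ∈ p.1, 0 < a := fun a ha => by have := mem_Icc.1 (hA ha); omega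
  have hAle : ∀ a ∈ p.1, a ≤ (r:ℤ) := fun a ha => (mem_Icc.1 (hA ha)).2
  have hBpos : ∀ a ∈ p.2, 0 < a := fun a ha => by have := mem_Icc.1 (hB ha); omega
  have hBle : ∀ a ∈ p.2, a ≤ ((n - r : ℕ):ℤ) := fun a ha => (mem_Icc.1 (hB ha)).2
  refine ⟨?_, ?_, ?_, ?_, ?_⟩
  · intro i hi
    simp only [decodeStr, if_pos hi]
    exact ⟨dlist_nonneg hApos _, dlist_le (by positivity) hAle _⟩
  · intro i hi
    simp only [decodeStr, if_neg (by omega : ¬ (i : ℕ) < r)]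
    constructor
    · have := dlist_le (by positivity) hBle (n - 1 - (i : ℕ))
      omega
    · have := dlist_nonneg hBpos (n - 1 - (i : ℕ))
      omega
  · intro i j hij
    have hij' : (i : ℕ) ≤ (j : ℕ) := hij
    by_cases hj : (j : ℕ) < r
    · have hi : (i : ℕ) < r := by omega
      simp only [decodeStr, if_pos hi, if_pos hj]
      exact dlist_anti hApos hij'
    · by_cases hi : (i : ℕ) < r
      · simp only [decodeStr, if_pos hi, if_neg hj]
        have := dlist_nonneg hApos (i : ℕ)
        have := dlist_nonneg hBpos (n - 1 - (j : ℕ))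
        omega
      · simp only [decodeStr, if_neg hi, if_neg hj]
        have := dlist_anti hBpos (show n - 1 - (j : ℕ) ≤ n - 1 - (i : ℕ) by omega)
        omega
  · intro i j hij hjr hne
    have hij' : (i : ℕ) < (j : ℕ) := hij
    have hir : (i : ℕ) < r := by omega
    simp only [decodeStr, if_pos hjr] at hne ⊢
    simp only [if_pos hir]
    exact dlist_strict hij' (dlist_lt_card hne)
  · intro i j hij hri hne
    have hij' : (i : ℕ) < (j : ℕ) := hij
    have hjn : (j : ℕ) < n := j.2
    have hrj : ¬ (j : ℕ) < r := by omega
    simp only [decodeStr, if_neg (by omega : ¬ (i : ℕ) < r)] at hne ⊢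
    simp only [if_neg hrj]
    have hne' : dlist p.2 (n - 1 - (i : ℕ)) ≠ 0 := by
      intro h; rw [h] at hne; exact hne (by ring)
    have hcard := dlist_lt_card hne'
    have := dlist_strict (show n - 1 - (j : ℕ) < n - 1 - (i : ℕ) by omega) hcard
    omega

lemma rho_decode {n r : ℕ} (hr : r ≤ n) {p : Finset ℤ × Finset ℤ}
    (h1 : p.1.card ≤ r) (h2 : p.2.card ≤ n - r) :
    rho n r (decodeStr n r p) = p.1.sum id + (Mconst (n - r) - p.2.sum id) := by
  have step1 : rho n r (decodeStr n r p) =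
      ∑ j ∈ range n, (if j < r then dlist p.1 j
        else (((j - r : ℕ) : ℤ) + 1 - dlist p.2 (n - 1 - j))) := by
    rw [rho, ← Fin.sum_univ_eq_sum_range]
    refine Finset.sum_congr rfl fun i _ => ?_
    by_cases hi : (i : ℕ) < r
    · simp [decodeStr, hi]
    · simp only [decodeStr, if_neg hi]
      ring
  rw [step1]
  rw [Finset.range_eq_Ico, ← Finset.sum_Ico_consecutive _ (Nat.zero_le r) hr]
  have hfirst : ∑ j ∈ Ico 0 r, (if j < r then dlist p.1 j
      else (((j - r : ℕ) : ℤ) + 1 - dlist p.2 (n - 1 - j))) = p.1.sum id := by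
    rw [← Finset.range_eq_Ico, ← dlist_sum h1]
    exact Finset.sum_congr rfl fun j hj => if_pos (mem_range.1 hj)
  have hsecond : ∑ j ∈ Ico r n, (if j < r then dlist p.1 j
      else (((j - r : ℕ) : ℤ) + 1 - dlist p.2 (n - 1 - j)))
      = Mconst (n - r) - p.2.sum id := by
    rw [Finset.sum_Ico_eq_sum_range]
    have : ∀ j ∈ range (n - r), (if r + j < r then dlist p.1 (r + j)
        else (((r + j - r : ℕ) : ℤ) + 1 - dlist p.2 (n - 1 - (r + j))))
        = ((j : ℕ) : ℤ) + 1 - dlist p.2 (n - r - 1 - j) := by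
      intro j hj
      rw [if_neg (by omega)]
      congr 2
      · omega
      · omega
    rw [Finset.sum_congr rfl this, Finset.sum_sub_distrib, gauss,
      Finset.sum_range_reflect (fun j => dlist p.2 j) (n - r), dlist_sum h2]
  rw [hfirst, hsecond]

noncomputable def encA (n r : ℕ) (w : Fin n → ℤ) : Finset ℤ :=
  (Icc (1:ℤ) (r:ℤ)).filter (fun a => ∃ i : Fin n, (i : ℕ) < r ∧ w i = a)

noncomputable def encB (n r : ℕ) (w : Fin n → ℤ) : Finset ℤ :=
  (Icc (1:ℤ) (((n - r : ℕ)):ℤ)).filter (fun a => ∃ i : Fin n, r ≤ (i : ℕ) ∧ w i = -a)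

lemma pos_eq {n r : ℕ} (hr : r ≤ n) {w : Fin n → ℤ} (hadm : Admissible n r w) :
    ∀ i : Fin n, (i : ℕ) < r → w i = dlist (encA n r w) (i : ℕ) := by
  obtain ⟨c1, c2, c3, c4, c5⟩ := hadm
  set A := encA n r w with hA
  have hcard : A.card ≤ r := by
    have := Finset.card_le_card (Finset.filter_subset
      (fun a => ∃ i : Fin n, (i : ℕ) < r ∧ w i = a) (Icc (1:ℤ) (r:ℤ)))
    rwa [card_Icc_int] at this
  set f : ℕ → ℤ := fun j => if h : j < n then w ⟨j, h⟩ else 0 with hf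
  have key := unique_desc (R := r) (s := A) f hcard
    (fun a ha => by have := mem_Icc.1 (Finset.mem_filter.1 ha).1; omega)
    (fun j hj => by
      have hjn : j < n := lt_of_lt_of_le hj hr
      simp only [hf, dif_pos hjn]
      exact (c1 ⟨j, hjn⟩ hj).1)
    (fun j j' hjj hj' hne => by
      have hj'n : j' < n := lt_of_lt_of_le hj' hr
      have hjn : j < n := by omega
      simp only [hf, dif_pos hjn, dif_pos hj'n] at hne ⊢
      exact c4 ⟨j, hjn⟩ ⟨j', hj'n⟩ (by simpa [Fin.lt_def]) hj' hne)
    (fun a ha0 => by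
      constructor
      · rintro ⟨j, hj, hfj⟩
        have hjn : j < n := lt_of_lt_of_le hj hr
        simp only [hf, dif_pos hjn] at hfj
        have hb := c1 ⟨j, hjn⟩ hj
        rw [hA, encA, Finset.mem_filter, mem_Icc]
        exact ⟨by omega, ⟨j, hjn⟩, hj, hfj⟩
      · intro ha
        obtain ⟨i, hir, hwi⟩ := (Finset.mem_filter.1 ha).2
        refine ⟨(i : ℕ), hir, ?_⟩
        simp only [hf, dif_pos i.2]
        rwa [Fin.eta])
  intro i hi
  have := key (i : ℕ) hi
  simp only [hf, dif_pos i.2, Fin.eta] at this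
  exact this

lemma neg_eq {n r : ℕ} (hr : r ≤ n) {w : Fin n → ℤ} (hadm : Admissible n r w) :
    ∀ i : Fin n, r ≤ (i : ℕ) → w i = -(dlist (encB n r w) (n - 1 - (i : ℕ))) := by
  obtain ⟨c1, c2, c3, c4, c5⟩ := hadm
  set m := n - r with hm
  set B := encB n r w with hB
  have hcard : B.card ≤ m := by
    have := Finset.card_le_card (Finset.filter_subset
      (fun a => ∃ i : Fin n, r ≤ (i : ℕ) ∧ w i = -a) (Icc (1:ℤ) ((m:ℕ):ℤ)))
    rwa [card_Icc_int] at this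
  set f : ℕ → ℤ := fun j => if h : r + (m - 1 - j) < n then -(w ⟨r + (m - 1 - j), h⟩) else 0
    with hf
  have hidx : ∀ j, j < m → r + (m - 1 - j) < n := by omega
  have key := unique_desc (R := m) (s := B) f hcard
    (fun a ha => by have := mem_Icc.1 (Finset.mem_filter.1 ha).1; omega)
    (fun j hj => by
      simp only [hf, dif_pos (hidx j hj)]
      have := (c2 ⟨r + (m - 1 - j), hidx j hj⟩ (by simp)).2
      omega)
    (fun j j' hjj hj' hne => by
      have hj : j < m := by omega
      simp only [hf, dif_pos (hidx j hj), dif_pos (hidx j' hj')] at hne ⊢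
      have hlt : r + (m - 1 - j') < r + (m - 1 - j) := by omega
      have hwne : w ⟨r + (m - 1 - j'), hidx j' hj'⟩ ≠ 0 := fun h => hne (by rw [h]; ring)
      have := c5 ⟨r + (m - 1 - j'), hidx j' hj'⟩ ⟨r + (m - 1 - j), hidx j hj⟩
        (by simp only [Fin.mk_lt_mk]; omega) (by simp) hwne
      omega)
    (fun a ha0 => by
      constructor
      · rintro ⟨j, hj, hfj⟩
        simp only [hf, dif_pos (hidx j hj)] at hfj
        have hb := c2 ⟨r + (m - 1 - j), hidx j hj⟩ (by simp)
        rw [hB, encB, Finset.mem_filter, mem_Icc]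
        refine ⟨by omega, ⟨r + (m - 1 - j), hidx j hj⟩, by simp, by omega⟩
      · intro ha
        obtain ⟨i, hir, hwi⟩ := (Finset.mem_filter.1 ha).2
        have hin : (i : ℕ) < n := i.2
        have hm1 : (i : ℕ) ≥ r := hir
        refine ⟨n - 1 - (i : ℕ), by omega, ?_⟩
        have hidx2 : r + (m - 1 - (n - 1 - (i : ℕ))) = (i : ℕ) := by omega
        simp only [hf, hidx2, dif_pos hin, Fin.eta]
        omega)
  intro i hi
  have hin : (i : ℕ) < n := i.2
  have hj : n - 1 - (i : ℕ) < m := by omega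
  have := key (n - 1 - (i : ℕ)) hj
  have hidx2 : r + (m - 1 - (n - 1 - (i : ℕ))) = (i : ℕ) := by omega
  simp only [hf, hidx2, dif_pos hin, Fin.eta] at this
  omega

lemma decode_encode {n r : ℕ} (hr : r ≤ n) {w : Fin n → ℤ} (hadm : Admissible n r w) :
    decodeStr n r (encA n r w, encB n r w) = w := by
  funext i
  by_cases hi : (i : ℕ) < r
  · rw [decodeStr]
    simp only [if_pos hi]
    exact (pos_eq hr hadm i hi).symm
  · rw [decodeStr]
    simp only [if_neg hi]
    exact (neg_eq hr hadm i (by omega)).symm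

lemma encode_decode {n r : ℕ} (hr : r ≤ n) {p : Finset ℤ × Finset ℤ}
    (hA : p.1 ⊆ Icc (1:ℤ) (r:ℤ)) (hB : p.2 ⊆ Icc (1:ℤ) (((n - r : ℕ)):ℤ)) :
    encA n r (decodeStr n r p) = p.1 ∧ encB n r (decodeStr n r p) = p.2 := by
  have hcardA : p.1.card ≤ r := by
    have := Finset.card_le_card hA; rwa [card_Icc_int] at this
  have hcardB : p.2.card ≤ n - r := by
    have := Finset.card_le_card hB; rwa [card_Icc_int] at this
  constructor
  · ext a
    rw [encA, Finset.mem_filter]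
    constructor
    · rintro ⟨haI, i, hir, hwi⟩
      have ha0 : a ≠ 0 := by have := mem_Icc.1 haI; omega
      rw [decodeStr] at hwi
      simp only [if_pos hir] at hwi
      have : (i : ℕ) < p.1.card := dlist_lt_card (hwi ▸ ha0)
      exact hwi ▸ dlist_mem this
    · intro ha
      obtain ⟨j, hj, hja⟩ := dlist_exists ha
      have hjr : j < r := lt_of_lt_of_le hj hcardA
      have hjn : j < n := lt_of_lt_of_le hjr hr
      refine ⟨hA ha, ⟨j, hjn⟩, hjr, ?_⟩
      rw [decodeStr]
      simp only [if_pos hjr]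
      exact hja
  · ext a
    rw [encB, Finset.mem_filter]
    constructor
    · rintro ⟨haI, i, hir, hwi⟩
      have ha0 : a ≠ 0 := by have := mem_Icc.1 haI; omega
      rw [decodeStr] at hwi
      simp only [if_neg (by omega : ¬ (i : ℕ) < r)] at hwi
      have hda : dlist p.2 (n - 1 - (i : ℕ)) = a := by omega
      have : n - 1 - (i : ℕ) < p.2.card := dlist_lt_card (hda ▸ ha0)
      exact hda ▸ dlist_mem this
    · intro ha
      obtain ⟨j, hj, hja⟩ := dlist_exists ha
      have hjm : j < n - r := lt_of_lt_of_le hj hcardB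
      have hin : n - 1 - j < n := by omega
      have hir : r ≤ n - 1 - j := by omega
      refine ⟨hB ha, ⟨n - 1 - j, hin⟩, hir, ?_⟩
      rw [decodeStr]
      simp only [if_neg (by simp only; omega : ¬ ((⟨n - 1 - j, hin⟩ : Fin n) : ℕ) < r)]
      have : n - 1 - ((⟨n - 1 - j, hin⟩ : Fin n) : ℕ) = j := by simp only; omega
      rw [this, hja]

lemma sCount_eq_card {n r k : ℕ} (hr : r ≤ n) :
    sCount n r k = (Epairs n r (k : ℤ)).card := by
  classical
  have himg : {w : Fin n → ℤ | Admissible n r w ∧ rho n r w = (k : ℤ)} =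
      decodeStr n r '' ↑(Epairs n r (k : ℤ)) := by
    ext w
    simp only [Set.mem_setOf_eq, Set.mem_image, Finset.mem_coe]
    constructor
    · rintro ⟨hadm, hrho⟩
      refine ⟨(encA n r w, encB n r w), ?_, decode_encode hr hadm⟩
      rw [Epairs, Finset.mem_filter, Finset.mem_product]
      have hA : encA n r w ⊆ Icc (1:ℤ) (r:ℤ) := Finset.filter_subset _ _
      have hB : encB n r w ⊆ Icc (1:ℤ) (((n - r : ℕ)):ℤ) := Finset.filter_subset _ _
      refine ⟨⟨Finset.mem_powerset.2 hA, Finset.mem_powerset.2 hB⟩, ?_⟩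
      have hcardA : (encA n r w).card ≤ r := by
        have := Finset.card_le_card hA; rwa [card_Icc_int] at this
      have hcardB : (encB n r w).card ≤ n - r := by
        have := Finset.card_le_card hB; rwa [card_Icc_int] at this
      have := rho_decode hr (p := (encA n r w, encB n r w)) hcardA hcardB
      rw [decode_encode hr hadm] at this
      rw [← this]
      exact hrho
    · rintro ⟨p, hp, rfl⟩
      rw [Epairs, Finset.mem_filter, Finset.mem_product] at hp
      obtain ⟨⟨hA, hB⟩, hsum⟩ := hp
      rw [Finset.mem_powerset] at hA hB
      have hcardA : p.1.card ≤ r := by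
        have := Finset.card_le_card hA; rwa [card_Icc_int] at this
      have hcardB : p.2.card ≤ n - r := by
        have := Finset.card_le_card hB; rwa [card_Icc_int] at this
      exact ⟨adm_decode hr hA hB, by rw [rho_decode hr hcardA hcardB]; exact hsum⟩
  have hinj : Set.InjOn (decodeStr n r) ↑(Epairs n r (k : ℤ)) := by
    intro p hp q hq heq
    rw [Finset.mem_coe, Epairs, Finset.mem_filter, Finset.mem_product] at hp hq
    have hpA := Finset.mem_powerset.1 hp.1.1
    have hpB := Finset.mem_powerset.1 hp.1.2
    have hqA := Finset.mem_powerset.1 hq.1.1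
    have hqB := Finset.mem_powerset.1 hq.1.2
    obtain ⟨e1, e2⟩ := encode_decode hr hpA hpB
    obtain ⟨e3, e4⟩ := encode_decode hr hqA hqB
    rw [heq] at e1 e2
    exact Prod.ext (e1 ▸ e3 ▸ rfl) (e2 ▸ e4 ▸ rfl)
  rw [sCount, himg, Set.ncard_image_of_injOn hinj, Set.ncard_coe_finset]

noncomputable def Ncard (c : ℕ) (j : ℤ) : ℕ :=
  ((Icc (1:ℤ) (c:ℤ)).powerset.filter (fun A => A.sum id = j)).card

lemma Mconst_zero : Mconst 0 = 0 := by
  rw [Mconst]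
  have : Icc (1:ℤ) ((0:ℕ):ℤ) = ∅ := by
    apply Finset.Icc_eq_empty
    norm_num
  rw [this, Finset.sum_empty]

lemma E_rr (c : ℕ) (k : ℤ) : (Epairs c c k).card = Ncard c k := by
  classical
  have hcc : c - c = 0 := Nat.sub_self c
  have hIcc : Icc (1:ℤ) (((c - c : ℕ)):ℤ) = ∅ := by
    rw [hcc]
    apply Finset.Icc_eq_empty
    norm_num
  rw [Ncard]
  apply Finset.card_bij (fun p _ => p.1)
  · intro p hp
    rw [Epairs, Finset.mem_filter, Finset.mem_product] at hp
    obtain ⟨⟨hA, hB⟩, hsum⟩ := hp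
    have hp2 : p.2 = ∅ := by
      have := Finset.mem_powerset.1 hB
      rw [hIcc] at this
      exact Finset.subset_empty.1 this
    rw [Finset.mem_filter]
    refine ⟨hA, ?_⟩
    rw [hp2, Finset.sum_empty, hcc, Mconst_zero] at hsum
    linarith
  · intro p hp q hq heq
    rw [Epairs, Finset.mem_filter, Finset.mem_product] at hp hq
    have hp2 : p.2 = ∅ := by
      have := Finset.mem_powerset.1 hp.1.2
      rw [hIcc] at this
      exact Finset.subset_empty.1 this
    have hq2 : q.2 = ∅ := by
      have := Finset.mem_powerset.1 hq.1.2
      rw [hIcc] at this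
      exact Finset.subset_empty.1 this
    exact Prod.ext heq (hp2.trans hq2.symm)
  · intro A hA
    rw [Finset.mem_filter] at hA
    refine ⟨(A, ∅), ?_, rfl⟩
    rw [Epairs, Finset.mem_filter, Finset.mem_product]
    refine ⟨⟨hA.1, Finset.mem_powerset.2 (Finset.empty_subset _)⟩, ?_⟩
    rw [Finset.sum_empty, hcc, Mconst_zero]
    have := hA.2
    simp only
    linarith

lemma sum_nonneg_of_subset_Icc {c : ℕ} {A : Finset ℤ} (hA : A ⊆ Icc (1:ℤ) (c:ℤ)) :
    0 ≤ A.sum id := by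
  apply Finset.sum_nonneg
  intro a ha
  have := mem_Icc.1 (hA ha)
  simp only [id]
  omega

lemma E_conv (n r k : ℕ) :
    (Epairs n r (k : ℤ)).card =
      ∑ i ∈ range (k + 1), Ncard r (i : ℤ) * Ncard (n - r) (((k - i : ℕ)) : ℤ) := by
  classical
  set m := n - r with hm
  set PA := (Icc (1:ℤ) (r:ℤ)).powerset with hPA
  set PB := (Icc (1:ℤ) (m:ℤ)).powerset with hPB
  set Fk := (PA ×ˢ PB).filter (fun p => p.1.sum id + p.2.sum id = (k:ℤ)) with hFk
  have hsdiff : ∀ B : Finset ℤ, B ⊆ Icc (1:ℤ) (m:ℤ) →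
      ((Icc (1:ℤ) (m:ℤ)) \ B).sum id = Mconst m - B.sum id := by
    intro B hB
    have h := Finset.sum_sdiff (f := id) hB
    have hM : Mconst m = ∑ x ∈ Icc (1:ℤ) (m:ℤ), id x :=
      Finset.sum_congr rfl (fun x _ => rfl)
    show (∑ x ∈ (Icc (1:ℤ) (m:ℤ)) \ B, id x) = Mconst m - ∑ x ∈ B, id x
    omega
  have step1 : (Epairs n r (k : ℤ)).card = Fk.card := by
    apply Finset.card_bij (fun p _ => (p.1, (Icc (1:ℤ) (m:ℤ)) \ p.2))
    · intro p hp
      rw [Epairs, Finset.mem_filter, Finset.mem_product] at hp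
      obtain ⟨⟨hA, hB⟩, hsum⟩ := hp
      rw [hFk, Finset.mem_filter, Finset.mem_product]
      refine ⟨⟨hA, Finset.mem_powerset.2 (Finset.sdiff_subset)⟩, ?_⟩
      dsimp only at hsum ⊢
      rw [← hm] at hsum
      rw [hsdiff p.2 (Finset.mem_powerset.1 hB)]
      omega
    · intro p hp q hq heq
      rw [Epairs, Finset.mem_filter, Finset.mem_product] at hp hq
      injection heq with h1 h2
      have hp2 := Finset.mem_powerset.1 hp.1.2
      have hq2 := Finset.mem_powerset.1 hq.1.2
      have := congrArg (fun s => (Icc (1:ℤ) (m:ℤ)) \ s) h2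
      rw [← hm] at hp2 hq2
      simp only [Finset.sdiff_sdiff_eq_self hp2, Finset.sdiff_sdiff_eq_self hq2] at this
      exact Prod.ext h1 this
    · intro q hq
      rw [hFk, Finset.mem_filter, Finset.mem_product] at hq
      obtain ⟨⟨hA, hB⟩, hsum⟩ := hq
      have hB' := Finset.mem_powerset.1 hB
      refine ⟨(q.1, (Icc (1:ℤ) (m:ℤ)) \ q.2), ?_, ?_⟩
      · rw [Epairs, Finset.mem_filter, Finset.mem_product]
        refine ⟨⟨hA, Finset.mem_powerset.2 (Finset.sdiff_subset)⟩, ?_⟩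
        dsimp only at hsum ⊢
        rw [← hm]
        rw [hsdiff q.2 hB']
        omega
      · simp only [Finset.sdiff_sdiff_eq_self hB']
  rw [step1]
  have step2 : Fk.card = ∑ i ∈ range (k + 1),
      ((Fk.filter (fun p => (p.1.sum id).toNat = i)).card) := by
    apply Finset.card_eq_sum_card_fiberwise
    intro p hp
    rw [Finset.mem_coe] at hp
    rw [hFk, Finset.mem_filter, Finset.mem_product] at hp
    obtain ⟨⟨hA, hB⟩, hsum⟩ := hp
    have h1 := sum_nonneg_of_subset_Icc (Finset.mem_powerset.1 hA)
    have h2 := sum_nonneg_of_subset_Icc (Finset.mem_powerset.1 hB)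
    rw [Finset.mem_coe, mem_range]
    dsimp only
    omega
  rw [step2]
  apply Finset.sum_congr rfl
  intro i hi
  have hik : i ≤ k := by have := mem_range.1 hi; omega
  have hfib : Fk.filter (fun p => (p.1.sum id).toNat = i) =
      (PA.filter (fun A => A.sum id = (i:ℤ))) ×ˢ
        (PB.filter (fun B => B.sum id = (((k - i : ℕ)):ℤ))) := by
    ext p
    rw [Finset.mem_filter, hFk, Finset.mem_filter, Finset.mem_product,
      Finset.mem_product, Finset.mem_filter, Finset.mem_filter]
    constructor
    · rintro ⟨⟨⟨hA, hB⟩, hsum⟩, htn⟩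
      have h1 := sum_nonneg_of_subset_Icc (Finset.mem_powerset.1 hA)
      refine ⟨⟨hA, by omega⟩, hB, ?_⟩
      have hki : (((k - i : ℕ)):ℤ) = (k:ℤ) - (i:ℤ) := by omega
      omega
    · rintro ⟨⟨hA, hsA⟩, hB, hsB⟩
      have hki : (((k - i : ℕ)):ℤ) = (k:ℤ) - (i:ℤ) := by omega
      refine ⟨⟨⟨hA, hB⟩, by omega⟩, by omega⟩
  rw [hfib, Finset.card_product]
  rfl


theorem sCount_convolution (n r k : ℕ) (hr : r ≤ n) (hk : k ≤ Rnk n r) :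
    sCount n r k = ∑ i ∈ Finset.range (k + 1),
      sCount r r i * sCount (n - r) (n - r) (k - i) := by
  rw [sCount_eq_card hr, E_conv n r k]
  apply Finset.sum_congr rfl
  intro i hi
  congr 1
  · rw [sCount_eq_card (le_refl r), E_rr]
  · rw [sCount_eq_card (le_refl (n - r)), E_rr]
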